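/- For every n ≥ 2 and every subset A of L, the subspace (L, τ(A)|_L) is perfect if and only if A is a Gδ-set in L with its Euclidean subspace topology. -/

import Mathlib

open Metric Set TopologicalSpace

noncomputable section

/-- The last coordinate `x (n-1)` of a point of `EuclideanSpace ℝ (Fin n)`
(junk value `0` if `n = 0`). -/
def lastCoord (n : ℕ) (x : EuclideanSpace ℝ (Fin n)) : ℝ :=
  if h : 0 < n then x ⟨n - 1, Nat.sub_lt h one_pos⟩ else 0

/-- The closed upper half-space `X = {x : x (n-1) ≥ 0}`. -/
def HalfSpace (n : ℕ) : Set (EuclideanSpace ℝ (Fin n)) := {x | 0 ≤ lastCoord n x}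

/-- The open upper half-space `P = {x : x (n-1) > 0}`. -/
def OpenHalf (n : ℕ) : Set (EuclideanSpace ℝ (Fin n)) := {x | 0 < lastCoord n x}

/-- The boundary hyperplane `L = {x : x (n-1) = 0}`. -/
def Bdry (n : ℕ) : Set (EuclideanSpace ℝ (Fin n)) := {x | lastCoord n x = 0}

/-- The `n`-th standard basis vector `e` (junk value `0` if `n = 0`). -/
def eVec (n : ℕ) : EuclideanSpace ℝ (Fin n) :=
  if h : 0 < n then EuclideanSpace.single ⟨n - 1, Nat.sub_lt h one_pos⟩ (1 : ℝ) else 0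

/-- The tangent ball `B̃(a, ε) = {a} ∪ B(a + ε • e, ε)`. -/
def tangentBall (n : ℕ) (a : EuclideanSpace ℝ (Fin n)) (ε : ℝ) :
    Set (EuclideanSpace ℝ (Fin n)) :=
  {a} ∪ ball (a + ε • eVec n) ε

/-- The generating family for the topology `τ(A)` on `X`:
balls `B(a,ε)` with `a ∈ P`, `0 < ε < a (n-1)`; traces `B(a,ε) ∩ X` with `a ∈ A`, `ε > 0`;
and tangent balls `B̃(a,ε)` with `a ∈ L \ A`, `ε > 0`. -/
def niemGen (n : ℕ) (A : Set (EuclideanSpace ℝ (Fin n))) : Set (Set (HalfSpace n)) :=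
  {s | ∃ a ∈ OpenHalf n, ∃ ε, 0 < ε ∧ ε < lastCoord n a ∧
      s = Subtype.val ⁻¹' ball a ε} ∪
  {s | ∃ a ∈ A, ∃ ε, 0 < ε ∧ s = Subtype.val ⁻¹' ball a ε} ∪
  {s | ∃ a ∈ Bdry n \ A, ∃ ε, 0 < ε ∧ s = Subtype.val ⁻¹' tangentBall n a ε}

/-- The topology `τ(A)` on `X`; `τ(∅)` is the Niemytzki topology `τ_N`. -/
def tau (n : ℕ) (A : Set (EuclideanSpace ℝ (Fin n))) : TopologicalSpace (HalfSpace n) :=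
  generateFrom (niemGen n A)

/-- The inclusion of `L` into `X`. -/
def inclLX (n : ℕ) (x : Bdry n) : HalfSpace n := ⟨x.1, le_of_eq x.2.symm⟩

/-- The subspace topology `τ(A)|_L` on `L` induced from `(X, τ(A))`. -/
def tauL (n : ℕ) (A : Set (EuclideanSpace ℝ (Fin n))) : TopologicalSpace (Bdry n) :=
  TopologicalSpace.induced (inclLX n) (tau n A)

/-- A space is perfect if every closed set is a `Gδ`-set. -/
def IsPerfectSpace (X : Type*) [TopologicalSpace X] : Prop :=
  ∀ s : Set X, IsClosed s → IsGδ s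

/-- An `Fσ`-set: a countable union of closed sets. -/
def IsFsigma {X : Type*} [TopologicalSpace X] (s : Set X) : Prop :=
  ∃ F : ℕ → Set X, (∀ i, IsClosed (F i)) ∧ s = ⋃ i, F i

/-- Countably paracompact: every countable open cover admits a locally finite open refinement. -/
def CountablyParacompact (X : Type*) [TopologicalSpace X] : Prop :=
  ∀ u : ℕ → Set X, (∀ i, IsOpen (u i)) → (⋃ i, u i) = Set.univ →
    ∃ (ι : Type) (v : ι → Set X), (∀ j, IsOpen (v j)) ∧ (⋃ j, v j) = Set.univ ∧
      LocallyFinite v ∧ ∀ j, ∃ i, v j ⊆ u i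

/-- A zero set: the zero locus of a continuous real-valued function. -/
def IsZeroSet {X : Type*} [TopologicalSpace X] (s : Set X) : Prop :=
  ∃ f : X → ℝ, Continuous f ∧ s = f ⁻¹' {0}

/-- `Y` is z-embedded in `X` if every zero set of the subspace `Y`
is the trace on `Y` of a zero set of `X`. -/
def ZEmbedded {X : Type*} [TopologicalSpace X] (Y : Set X) : Prop :=
  ∀ s : Set Y, IsZeroSet s → ∃ Z : Set X, IsZeroSet Z ∧ s = Subtype.val ⁻¹' Z

/-- `Y` is `C*`-embedded in `X` if every bounded continuous real-valued function on the
subspace `Y` extends to a bounded continuous function on `X`. -/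
def CStarEmbedded {X : Type*} [TopologicalSpace X] (Y : Set X) : Prop :=
  ∀ f : Y → ℝ, Continuous f → (∃ M, ∀ y, |f y| ≤ M) →
    ∃ g : X → ℝ, Continuous g ∧ (∃ M, ∀ x, |g x| ≤ M) ∧ ∀ y : Y, g ↑y = f y
end

section AuxNiem

variable {n : ℕ}

lemma abs_coord_sub_le_dist (x y : EuclideanSpace ℝ (Fin n)) (i : Fin n) :
    |x i - y i| ≤ dist x y := by
  rw [EuclideanSpace.dist_eq, ← Real.dist_eq]
  have h2 : dist (x i) (y i) ^ 2 ≤ ∑ j, dist (x j) (y j) ^ 2 :=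
    Finset.single_le_sum (f := fun j => dist (x j) (y j) ^ 2)
      (fun j _ => sq_nonneg _) (Finset.mem_univ i)
  exact (Real.le_sqrt dist_nonneg (le_trans (sq_nonneg _) h2)).2 h2

lemma lastCoord_eq (hn : 0 < n) (x : EuclideanSpace ℝ (Fin n)) :
    lastCoord n x = x ⟨n - 1, Nat.sub_lt hn one_pos⟩ := dif_pos hn

lemma abs_lastCoord_sub_le_dist (hn : 0 < n) (x y : EuclideanSpace ℝ (Fin n)) :
    |lastCoord n x - lastCoord n y| ≤ dist x y := by
  rw [lastCoord_eq hn, lastCoord_eq hn]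
  exact abs_coord_sub_le_dist x y _

lemma lastCoord_add_smul_eVec (hn : 0 < n) (a : EuclideanSpace ℝ (Fin n)) (ε : ℝ) :
    lastCoord n (a + ε • eVec n) = lastCoord n a + ε := by
  rw [lastCoord_eq hn, lastCoord_eq hn]
  simp [eVec, dif_pos hn, EuclideanSpace.single_apply]

lemma tangent_miss (hn : 0 < n) {x a : EuclideanSpace ℝ (Fin n)}
    (hx : x ∈ Bdry n) (ha : a ∈ Bdry n) {ε : ℝ} (hε : 0 < ε) :
    x ∉ ball (a + ε • eVec n) ε := by
  intro h
  have h1 := abs_lastCoord_sub_le_dist hn x (a + ε • eVec n)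
  rw [lastCoord_add_smul_eVec hn] at h1
  have hx' : lastCoord n x = 0 := hx
  have ha' : lastCoord n a = 0 := ha
  rw [hx', ha'] at h1
  have h2 : dist x (a + ε • eVec n) < ε := mem_ball.mp h
  rw [zero_add, zero_sub, abs_neg, abs_of_pos hε] at h1
  linarith

lemma deep_miss (hn : 0 < n) {x a : EuclideanSpace ℝ (Fin n)}
    (hx : x ∈ Bdry n) {ε : ℝ} (hεa : ε < lastCoord n a) :
    x ∉ ball a ε := by
  intro h
  have h1 := abs_lastCoord_sub_le_dist hn x a
  have hx' : lastCoord n x = 0 := hx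
  rw [hx', zero_sub, abs_neg] at h1
  have h2 : dist x a < ε := mem_ball.mp h
  have := le_abs_self (lastCoord n a)
  linarith

/-- The key property characterizing `τ(A)|_L`-open sets. -/
def NOpen (n : ℕ) (A : Set (EuclideanSpace ℝ (Fin n))) (U : Set (Bdry n)) : Prop :=
  ∀ x ∈ U, (x : EuclideanSpace ℝ (Fin n)) ∈ A →
    ∃ ε > 0, ∀ y : Bdry n, dist (y : EuclideanSpace ℝ (Fin n)) (x : EuclideanSpace ℝ (Fin n)) < ε → y ∈ U

lemma genOpen_NOpen (hn : 0 < n) {A : Set (EuclideanSpace ℝ (Fin n))}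
    {V : Set (HalfSpace n)} (h : TopologicalSpace.GenerateOpen (niemGen n A) V) :
    NOpen n A (inclLX n ⁻¹' V) := by
  induction h with
  | basic s hs =>
    rcases hs with (⟨a, ha, ε, hε, hεa, rfl⟩ | ⟨a, haA, ε, hε, rfl⟩) | ⟨a, ha, ε, hε, rfl⟩
    · intro x hx _
      exact absurd (show (x : EuclideanSpace ℝ (Fin n)) ∈ ball a ε from hx)
        (deep_miss hn x.2 hεa)
    · intro x hx _
      have hx' : dist (x : EuclideanSpace ℝ (Fin n)) a < ε := hx
      refine ⟨ε - dist (x : EuclideanSpace ℝ (Fin n)) a, by linarith, fun y hy => ?_⟩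
      show dist (y : EuclideanSpace ℝ (Fin n)) a < ε
      have := dist_triangle (y : EuclideanSpace ℝ (Fin n)) (x : EuclideanSpace ℝ (Fin n)) a
      linarith
    · intro x hx hxA
      have hx' : (x : EuclideanSpace ℝ (Fin n)) = a ∨
          (x : EuclideanSpace ℝ (Fin n)) ∈ ball (a + ε • eVec n) ε := hx
      rcases hx' with h1 | h1
      · exact absurd (h1 ▸ hxA) ha.2
      · exact absurd h1 (tangent_miss hn x.2 ha.1 hε)
  | univ => exact fun x _ _ => ⟨1, one_pos, fun y _ => trivial⟩
  | inter s t _ _ ihs iht =>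
    intro x hx hxA
    obtain ⟨ε1, hε1, h1⟩ := ihs x hx.1 hxA
    obtain ⟨ε2, hε2, h2⟩ := iht x hx.2 hxA
    exact ⟨min ε1 ε2, lt_min hε1 hε2, fun y hy =>
      ⟨h1 y (lt_of_lt_of_le hy (min_le_left _ _)), h2 y (lt_of_lt_of_le hy (min_le_right _ _))⟩⟩
  | sUnion S _ ih =>
    intro x hx hxA
    obtain ⟨s, hsS, hxs⟩ := hx
    obtain ⟨ε, hε, h1⟩ := ih s hsS x hxs hxA
    exact ⟨ε, hε, fun y hy => ⟨s, hsS, h1 y hy⟩⟩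

lemma tauL_isOpen_iff (hn : 0 < n) {A : Set (EuclideanSpace ℝ (Fin n))} (U : Set (Bdry n)) :
    @IsOpen _ (tauL n A) U ↔ NOpen n A U := by
  constructor
  · intro h
    obtain ⟨V, hV, rfl⟩ :=
      (h : ∃ V, TopologicalSpace.GenerateOpen (niemGen n A) V ∧ inclLX n ⁻¹' V = U)
    exact genOpen_NOpen hn hV
  · intro hN
    rw [@isOpen_iff_forall_mem_open _ (tauL n A) U]
    intro x hx
    by_cases hxA : (x : EuclideanSpace ℝ (Fin n)) ∈ A
    · obtain ⟨ε, hε, hball⟩ := hN x hx hxA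
      refine ⟨inclLX n ⁻¹' (Subtype.val ⁻¹' ball (x : EuclideanSpace ℝ (Fin n)) ε),
        fun y hy => hball y hy, ?_, ?_⟩
      · exact ⟨_, .basic _ (Or.inl (Or.inr ⟨_, hxA, ε, hε, rfl⟩)), rfl⟩
      · show dist (x : EuclideanSpace ℝ (Fin n)) (x : EuclideanSpace ℝ (Fin n)) < ε
        simpa using hε
    · refine ⟨inclLX n ⁻¹' (Subtype.val ⁻¹' tangentBall n (x : EuclideanSpace ℝ (Fin n)) 1),
        ?_, ?_, ?_⟩
      · intro y hy
        have hy' : (y : EuclideanSpace ℝ (Fin n)) = (x : EuclideanSpace ℝ (Fin n)) ∨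
            (y : EuclideanSpace ℝ (Fin n)) ∈
              ball ((x : EuclideanSpace ℝ (Fin n)) + (1:ℝ) • eVec n) 1 := hy
        rcases hy' with h1 | h1
        · have : y = x := Subtype.ext h1
          rw [this]; exact hx
        · exact absurd h1 (tangent_miss hn y.2 x.2 one_pos)
      · exact ⟨_, .basic _ (Or.inr ⟨_, ⟨x.2, hxA⟩, 1, one_pos, rfl⟩), rfl⟩
      · exact Or.inl rfl

lemma euclid_open_NOpen {A : Set (EuclideanSpace ℝ (Fin n))} {V : Set (Bdry n)}
    (hV : IsOpen V) : NOpen n A V := by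
  intro x hx _
  obtain ⟨ε, hε, hb⟩ := Metric.isOpen_iff.mp hV x hx
  refine ⟨ε, hε, fun y hy => hb ?_⟩
  rw [mem_ball, Subtype.dist_eq]
  exact hy

/-- The "Euclidean interior with respect to balls" of a set. -/
def Wset {n : ℕ} (U : Set (Bdry n)) : Set (Bdry n) :=
  {x | ∃ ε > 0, ∀ y : Bdry n,
    dist (y : EuclideanSpace ℝ (Fin n)) (x : EuclideanSpace ℝ (Fin n)) < ε → y ∈ U}

lemma Wset_isOpen (U : Set (Bdry n)) : IsOpen (Wset U) := by
  rw [Metric.isOpen_iff]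
  rintro x ⟨ε, hε, hb⟩
  refine ⟨ε / 2, half_pos hε, fun y hy => ?_⟩
  rw [mem_ball, Subtype.dist_eq] at hy
  refine ⟨ε / 2, half_pos hε, fun z hz => hb z ?_⟩
  have := dist_triangle (z : EuclideanSpace ℝ (Fin n)) (y : EuclideanSpace ℝ (Fin n))
    (x : EuclideanSpace ℝ (Fin n))
  linarith

lemma Wset_subset (U : Set (Bdry n)) : Wset U ⊆ U := by
  rintro x ⟨ε, hε, hb⟩
  exact hb x (by simpa using hε)

lemma isGδ_tauL_of_isGδ (hn : 0 < n) {A : Set (EuclideanSpace ℝ (Fin n))}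
    {s : Set (Bdry n)} (h : IsGδ s) : @IsGδ _ (tauL n A) s := by
  obtain ⟨T, hT, hTc, rfl⟩ := h
  exact ⟨T, fun t ht => (tauL_isOpen_iff hn t).2 (euclid_open_NOpen (hT t ht)), hTc, rfl⟩

end AuxNiem

theorem tauL_perfect_iff' (n : ℕ) (hn : 2 ≤ n)
    (A : Set (EuclideanSpace ℝ (Fin n))) (hA : A ⊆ Bdry n) :
    @IsPerfectSpace (Bdry n) (tauL n A) ↔ IsGδ (Subtype.val ⁻¹' A : Set (Bdry n)) := by
  have hn0 : 0 < n := by omega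
  constructor
  · intro hperf
    have hclosed : @IsClosed _ (tauL n A) (Subtype.val ⁻¹' A) := by
      rw [← @isOpen_compl_iff _ _ (tauL n A)]
      exact (tauL_isOpen_iff hn0 _).2 (fun x hx hxA => absurd hxA hx)
    obtain ⟨T, hT, hTc, hTeq⟩ := hperf _ hclosed
    refine ⟨Wset '' T, ?_, hTc.image _, ?_⟩
    · rintro t ⟨U, hU, rfl⟩; exact Wset_isOpen U
    · apply Subset.antisymm
      · rintro x hxA t ⟨U, hUT, rfl⟩
        have hxU : x ∈ U := (hTeq ▸ hxA : x ∈ ⋂₀ T) U hUT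
        exact (tauL_isOpen_iff hn0 U).1 (hT U hUT) x hxU hxA
      · intro x hx
        rw [hTeq]
        intro U hUT
        exact Wset_subset U (hx _ ⟨U, hUT, rfl⟩)
  · intro hGδ s hs
    have hsc : NOpen n A sᶜ :=
      (tauL_isOpen_iff hn0 _).1 ((@isOpen_compl_iff _ _ (tauL n A)).2 hs)
    have hW2 : Wset sᶜ ⊆ sᶜ := Wset_subset _
    have hkey : s = ((Subtype.val ⁻¹' A) ∩ (Wset sᶜ)ᶜ) ∪ (s \ (Subtype.val ⁻¹' A)) := by
      ext x; constructor
      · intro hx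
        by_cases hxA : x ∈ Subtype.val ⁻¹' A
        · exact Or.inl ⟨hxA, fun hxW => (hW2 hxW) hx⟩
        · exact Or.inr ⟨hx, hxA⟩
      · rintro (⟨hxA, hxW⟩ | ⟨hx, _⟩)
        · by_contra hxs
          exact hxW (hsc x hxs hxA)
        · exact hx
    rw [hkey]
    have g1 : @IsGδ _ (tauL n A) ((Subtype.val ⁻¹' A) ∩ (Wset sᶜ)ᶜ) :=
      @IsGδ.inter _ (tauL n A) _ _ (isGδ_tauL_of_isGδ hn0 hGδ)
        (isGδ_tauL_of_isGδ hn0 (IsClosed.isGδ (Wset_isOpen _).isClosed_compl))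
    have g2 : @IsGδ _ (tauL n A) (s \ (Subtype.val ⁻¹' A)) :=
      @IsOpen.isGδ _ (tauL n A) _
        ((tauL_isOpen_iff hn0 _).2 (fun x hx hxA => absurd hxA hx.2))
    exact @IsGδ.union _ (tauL n A) _ _ g1 g2

/-- For every `n ≥ 2` and `A ⊆ L`, the subspace `(L, τ(A)|_L)` is perfect iff
`A` is a `Gδ`-set in `L` with its Euclidean subspace topology. -/
theorem tauL_perfect_iff (n : ℕ) (hn : 2 ≤ n)
    (A : Set (EuclideanSpace ℝ (Fin n))) (hA : A ⊆ Bdry n) :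
    @IsPerfectSpace (Bdry n) (tauL n A) ↔ IsGδ (Subtype.val ⁻¹' A : Set (Bdry n)) := by
  exact tauL_perfect_iff' n hn A hA
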